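/- arXiv:2508.11572 — 3 statements merged into one kernel-verified Lean document; each statement's English description precedes it below -/
import Mathlib

section
/- A finite connected graph is non-bipartite if and only if its signless Laplacian matrix L_+ = D + A (where D is the degree matrix and A the adjacency matrix) is positive definite. -/
/-- A graph is bipartite if its vertex set can be partitioned into two sets such
that every edge has one endpoint in each set. -/
def SimpleGraph.IsBipartite' {V : Type*} (G : SimpleGraph V) : Prop :=
  ∃ s : Set V, ∀ ⦃a b : V⦄, G.Adj a b → (a ∈ s ↔ b ∉ s)

open Finset Matrix SimpleGraph

section Aux

variable {V : Type*} [Fintype V] [DecidableEq V] (G : SimpleGraph V) [DecidableRel G.Adj]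

lemma signless_form (x : V → ℝ) :
    x ⬝ᵥ ((G.degMatrix ℝ + G.adjMatrix ℝ) *ᵥ x) =
      (∑ i : V, ∑ j : V, if G.Adj i j then (x i + x j) ^ 2 else 0) / 2 := by
  simp_rw [add_mulVec, dotProduct_add, dotProduct_mulVec_degMatrix,
    dotProduct_mulVec_adjMatrix, ← sum_add_distrib, degree_eq_sum_if_adj, sum_mul, ite_mul,
    one_mul, zero_mul, ← sum_add_distrib, ite_add_ite, add_zero]
  rw [← add_self_div_two (∑ i : V, ∑ j : V, _)]
  conv_lhs => enter [1, 2, 2, i, 2, j]; rw [if_congr (adj_comm G i j) rfl rfl]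
  conv_lhs => enter [1, 2]; rw [Finset.sum_comm]
  simp_rw [← sum_add_distrib, ite_add_ite]
  congr 2 with i
  congr 2 with j
  ring_nf

lemma signless_zero_iff (x : V → ℝ) :
    x ⬝ᵥ ((G.degMatrix ℝ + G.adjMatrix ℝ) *ᵥ x) = 0 ↔
      ∀ i j : V, G.Adj i j → x i = - x j := by
  simp (disch := intros; positivity)
    [signless_form, sum_eq_zero_iff_of_nonneg, add_eq_zero_iff_eq_neg]

end Aux

/-- A finite connected graph is non-bipartite iff its signless Laplacian
`L₊ = D + A` is positive definite. -/
theorem nonbipartite_iff_signless_laplacian_posDef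
    {V : Type*} [Fintype V] [DecidableEq V]
    (G : SimpleGraph V) [DecidableRel G.Adj] (hconn : G.Connected) :
    ¬ G.IsBipartite' ↔ (G.degMatrix ℝ + G.adjMatrix ℝ).PosDef := by
  classical
  have hsymm : (G.degMatrix ℝ + G.adjMatrix ℝ).IsHermitian := by
    rw [Matrix.IsHermitian, conjTranspose_eq_transpose_of_trivial]
    exact (isSymm_degMatrix ℝ G).add (isSymm_adjMatrix G)
  constructor
  · intro hnb
    refine Matrix.PosDef.of_dotProduct_mulVec_pos hsymm (fun x hx => ?_)
    simp only [star_trivial, RCLike.re_to_real]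
    have hnn : 0 ≤ x ⬝ᵥ ((G.degMatrix ℝ + G.adjMatrix ℝ) *ᵥ x) := by
      rw [signless_form]; positivity
    rcases hnn.lt_or_eq with h | h
    · exact h
    exfalso
    have hadj : ∀ i j : V, G.Adj i j → x i = - x j := (signless_zero_iff G x).mp h.symm
    have habs : ∀ i j : V, G.Reachable i j → |x i| = |x j| := by
      rintro i j ⟨w⟩
      induction w with
      | nil => rfl
      | cons hA _ ih => rw [← ih, hadj _ _ hA, abs_neg]
    obtain ⟨v, hv⟩ := Function.ne_iff.mp hx
    have hne : ∀ u : V, x u ≠ 0 := by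
      intro u h0
      have := habs v u (hconn v u)
      rw [h0, abs_zero, abs_eq_zero] at this
      exact hv this
    refine hnb ⟨{u | 0 < x u}, fun a b hab => ?_⟩
    rw [Set.mem_setOf_eq, Set.mem_setOf_eq, hadj a b hab, neg_pos, not_lt]
    exact ⟨le_of_lt, fun h' => h'.lt_of_ne (hne b)⟩
  · rintro hpd ⟨s, hs⟩
    set x : V → ℝ := fun v => if v ∈ s then 1 else -1 with hxdef
    have hx : x ≠ 0 := by
      obtain ⟨v⟩ := hconn.nonempty
      intro h
      have := congrFun h v
      simp only [hxdef, Pi.zero_apply] at this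
      by_cases hv : v ∈ s
      · rw [if_pos hv] at this; exact one_ne_zero this
      · rw [if_neg hv] at this; exact (neg_ne_zero.mpr one_ne_zero) this
    have h0 : x ⬝ᵥ ((G.degMatrix ℝ + G.adjMatrix ℝ) *ᵥ x) = 0 := by
      rw [signless_zero_iff]
      intro i j hij
      simp only [hxdef]
      by_cases hi : i ∈ s
      · rw [if_pos hi, if_neg ((hs hij).mp hi)]; norm_num
      · rw [if_neg hi, if_pos (not_not.mp (fun hb => hi ((hs hij).mpr hb)))]
    have := hpd.dotProduct_mulVec_pos hx
    rw [star_trivial] at this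
    simp only [h0, RCLike.re_to_real] at this
    exact lt_irrefl 0 this
end

section
/- Suppose (G^k) is a sequence of symmetric positive semidefinite operators and (Q^k) a sequence of vectors such that for all k, ⟨Q^{k+1} − Q*, G^k(Q^k − Q^{k+1})⟩ ≥ 0 and ‖Q^{k+1} − Q*‖²_{G^{k+1}} ≤ ‖Q^{k+1} − Q*‖²_{G^k}. Then Σ_{k=0}^∞ ‖Q^k − Q^{k+1}‖²_{G^k} ≤ ‖Q^0 − Q*‖²_{G^0}; in particular ‖Q^k − Q^{k+1}‖²_{G^k} → 0. -/
open RealInnerProductSpace Filter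

/-- If `⟨Q^{k+1} − Q*, G^k(Q^k − Q^{k+1})⟩ ≥ 0` and the `G`-norms of `Q^{k+1} − Q*`
are monotone in `G`, then `Σ_k ‖Q^k − Q^{k+1}‖²_{G^k} ≤ ‖Q^0 − Q*‖²_{G^0}` and
`‖Q^k − Q^{k+1}‖²_{G^k} → 0`. -/
theorem telescoping_sum_bounded_and_tendsto_zero
    {V : Type*} [NormedAddCommGroup V] [InnerProductSpace ℝ V]
    [FiniteDimensional ℝ V]
    (G : ℕ → (V →ₗ[ℝ] V)) (hsym : ∀ k, (G k).IsSymmetric)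
    (hpsd : ∀ k (v : V), 0 ≤ ⟪v, G k v⟫)
    (Q : ℕ → V) (Qs : V)
    (hpos : ∀ k, 0 ≤ ⟪Q (k + 1) - Qs, (G k) (Q k - Q (k + 1))⟫)
    (hmono : ∀ k, ⟪Q (k + 1) - Qs, (G (k + 1)) (Q (k + 1) - Qs)⟫ ≤
      ⟪Q (k + 1) - Qs, (G k) (Q (k + 1) - Qs)⟫) :
    (∀ m : ℕ, ∑ k ∈ Finset.range m, ⟪Q k - Q (k + 1), (G k) (Q k - Q (k + 1))⟫ ≤
        ⟪Q 0 - Qs, (G 0) (Q 0 - Qs)⟫) ∧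
    Tendsto (fun k => ⟪Q k - Q (k + 1), (G k) (Q k - Q (k + 1))⟫)
      atTop (nhds 0) := by
  set a : ℕ → ℝ := fun k => ⟪Q k - Qs, (G k) (Q k - Qs)⟫ with ha
  set f : ℕ → ℝ := fun k => ⟪Q k - Q (k + 1), (G k) (Q k - Q (k + 1))⟫ with hf
  have key : ∀ k, f k ≤ a k - a (k + 1) := by
    intro k
    have hdecomp : (Q k - Qs) = (Q (k+1) - Qs) + (Q k - Q (k+1)) := by abel
    have hsymk := hsym k
    have expand : ⟪Q k - Qs, (G k) (Q k - Qs)⟫ =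
        ⟪Q (k+1) - Qs, (G k) (Q (k+1) - Qs)⟫ + 2 * ⟪Q (k+1) - Qs, (G k) (Q k - Q (k+1))⟫
          + f k := by
      rw [hdecomp]
      simp only [map_add, inner_add_left, inner_add_right, hf]
      have : ⟪Q k - Q (k+1), (G k) (Q (k+1) - Qs)⟫ =
          ⟪Q (k+1) - Qs, (G k) (Q k - Q (k+1))⟫ := by
        rw [← hsymk]; exact real_inner_comm _ _
      rw [this]; ring
    have h1 : f k ≤ a k - ⟪Q (k+1) - Qs, (G k) (Q (k+1) - Qs)⟫ := by
      have := hpos k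
      simp only [ha]
      nlinarith [expand]
    calc f k ≤ a k - ⟪Q (k+1) - Qs, (G k) (Q (k+1) - Qs)⟫ := h1
      _ ≤ a k - a (k+1) := by have := hmono k; simp only [ha]; linarith
  have hf0 : ∀ k, 0 ≤ f k := fun k => hpsd k _
  have ha0 : ∀ k, 0 ≤ a k := fun k => hpsd k _
  have hbound : ∀ m : ℕ, ∑ k ∈ Finset.range m, f k ≤ a 0 := by
    intro m
    calc ∑ k ∈ Finset.range m, f k ≤ ∑ k ∈ Finset.range m, (a k - a (k+1)) :=
          Finset.sum_le_sum fun k _ => key k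
      _ = a 0 - a m := by rw [Finset.sum_range_sub' a m]
      _ ≤ a 0 := by linarith [ha0 m]
  refine ⟨hbound, ?_⟩
  have hsummable : Summable f := summable_of_sum_range_le hf0 hbound
  exact hsummable.tendsto_atTop_zero
end

section
/- Let L be the Laplacian of a connected graph with PSD square root N = L^{1/2}. If X̂, Ŷ, M̂ satisfy ∇f(X̂) + N Ŷ + L M̂ X̂ = 0 and N M̂ X̂ = 0, where M̂ is symmetric PSD with null(M̂) = span(1), then X̂ is consensual (X̂ = 1 x̂ᵀ for some x̂) and ∇f(X̂) + N Ŷ = 0, i.e., the pair (X̂, Ŷ) satisfies the first-order optimality conditions 0 = ∇f(X*) + N Y* and 0 = L X*. -/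
/-- If `∇f(X̂) + N Ŷ + L M̂ X̂ = 0` and `N M̂ X̂ = 0`, where `L` is the Laplacian of
a connected graph with PSD square root `N = L^{1/2}` and `M̂` is symmetric PSD
with `null(M̂) = span(1)`, then `X̂` is consensual and `(X̂, Ŷ)` satisfies the
first-order optimality conditions `0 = ∇f(X̂) + N Ŷ` and `0 = L X̂`. -/
theorem stationary_point_is_optimal
    {N n : ℕ} (L Nm Mh : Matrix (Fin N) (Fin N) ℝ)
    (hL : L.PosSemidef)
    (hLnull : ∀ v : Fin N → ℝ, L.mulVec v = 0 ↔ ∃ c : ℝ, v = fun _ => c)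
    (hNm : Nm.PosSemidef) (hNN : Nm * Nm = L)
    (hMh : Mh.PosSemidef)
    (hMhnull : ∀ v : Fin N → ℝ, Mh.mulVec v = 0 ↔ ∃ c : ℝ, v = fun _ => c)
    (Xh Yh Gf : Matrix (Fin N) (Fin n) ℝ)
    (h1 : Gf + Nm * Yh + L * Mh * Xh = 0)
    (h2 : Nm * Mh * Xh = 0) :
    (∃ x : Fin n → ℝ, Xh = fun _ j => x j) ∧ Gf + Nm * Yh = 0 ∧ L * Xh = 0 := by
  -- Mh annihilates constant vectors
  have hMh1 : Mh.mulVec (fun _ => (1:ℝ)) = 0 := (hMhnull _).mpr ⟨1, rfl⟩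
  -- column sums of Mh vanish (by symmetry)
  have hsym : ∀ i k, Mh i k = Mh k i := fun i k => by
    have := congrFun (congrFun hMh.isHermitian k) i
    simpa using this
  have hMhcolsum : ∀ k, (∑ i, Mh i k) = 0 := by
    intro k
    have h1' := congrFun hMh1 k
    simp only [Matrix.mulVec, dotProduct, mul_one, Pi.zero_apply] at h1'
    rw [Finset.sum_congr rfl fun i _ => hsym i k]
    exact h1'
  -- key: each column of Mh * Xh vanishes
  have hcolzero : ∀ j, Mh.mulVec (fun k => Xh k j) = 0 := by
    intro j
    set v : Fin N → ℝ := Mh.mulVec (fun k => Xh k j) with hv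
    -- Nm.mulVec v = 0 from h2
    have hNv : Nm.mulVec v = 0 := by
      funext i
      have h := congrFun (congrFun h2 i) j
      simp only [Matrix.zero_apply] at h
      show Nm.mulVec v i = 0
      rw [hv, Matrix.mulVec_mulVec]
      simpa [Matrix.mul_apply, Matrix.mulVec, dotProduct] using h
    -- hence L.mulVec v = 0, hence v is constant
    have hLv : L.mulVec v = 0 := by
      rw [← hNN, ← Matrix.mulVec_mulVec, hNv, Matrix.mulVec_zero]
    obtain ⟨c, hc⟩ := (hLnull v).mp hLv
    -- sum of v is zero since column sums of Mh vanish
    have hsum : (∑ i, v i) = 0 := by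
      rw [hv]
      simp only [Matrix.mulVec, dotProduct]
      rw [Finset.sum_comm]
      simp only [← Finset.sum_mul]
      simp [hMhcolsum]
    rcases Nat.eq_zero_or_pos N with h0 | h0
    · funext i; exact absurd i.2 (by omega)
    · rw [hc] at hsum
      simp [Finset.sum_const] at hsum
      rcases hsum with h | h
      · omega
      · rw [hc, h]; funext i; rfl
  -- Mh * Xh = 0 as a matrix
  have hMX : Mh * Xh = 0 := by
    funext i j
    have := congrFun (hcolzero j) i
    simpa [Matrix.mul_apply, Matrix.mulVec, dotProduct] using this
  -- columns of Xh are constant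
  have hXconst : ∀ j, ∃ c : ℝ, (fun k => Xh k j) = fun _ => c := fun j =>
    (hMhnull _).mp (hcolzero j)
  choose x hx using hXconst
  have hXh : Xh = fun _ j => x j := by
    funext i j
    exact congrFun (hx j) i
  refine ⟨⟨x, hXh⟩, ?_, ?_⟩
  · have : L * Mh * Xh = 0 := by rw [Matrix.mul_assoc, hMX, Matrix.mul_zero]
    rw [this, add_zero] at h1
    exact h1
  · funext i j
    have hLc : L.mulVec (fun _ => x j) = 0 := (hLnull _).mpr ⟨x j, rfl⟩
    have := congrFun hLc i
    simp only [Matrix.mul_apply, Matrix.zero_apply]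
    rw [hXh]
    simpa [Matrix.mulVec, dotProduct] using this
end
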